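/- arXiv:2312.07155 — 7 statements merged into one kernel-verified Lean document; each statement's English description precedes it below -/
import Mathlib

section
/- Let ζ₁ : ℂ → ℂ be differentiable at 0, let m ∈ ℕ, and let λ : Fin m → ℂ be a finite family of nonzero complex numbers. Define ζ₂ : ℂ → ℂ by ζ₂(s) = ζ₁(s) + (exp(−2πis) − 1) · Σ_{k=0}^{m−1} exp(−s · Log(λ k)), where Log is the principal complex logarithm. Then ζ₂ is differentiable at 0 and exp(−ζ₂′(0)) = exp(−ζ₁′(0)). (This expresses that moving the branch cut of the logarithm through finitely many eigenvalues, which changes the chosen logarithm of each of them by 2πi, does not change the spectral determinant exp(−ζ′(0)).) -/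
open Complex

/-- Moving the branch cut of the logarithm through finitely many eigenvalues
(which changes the chosen logarithm of each of them by `2πi`) does not change the
spectral determinant `exp(−ζ′(0))`. -/
theorem det_invariant_finitely_many_eigenvalues
    (ζ₁ : ℂ → ℂ) (hζ₁ : DifferentiableAt ℂ ζ₁ 0)
    (m : ℕ) (lam : Fin m → ℂ) (hlam : ∀ k, lam k ≠ 0)
    (ζ₂ : ℂ → ℂ)
    (hζ₂ : ∀ s : ℂ, ζ₂ s =
      ζ₁ s + (Complex.exp (-2 * Real.pi * Complex.I * s) - 1) *
        ∑ k : Fin m, Complex.exp (-s * Complex.log (lam k))) :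
    DifferentiableAt ℂ ζ₂ 0 ∧
      Complex.exp (-(deriv ζ₂ 0)) = Complex.exp (-(deriv ζ₁ 0)) := by
  have hf : HasDerivAt (fun s : ℂ => Complex.exp (-2 * Real.pi * Complex.I * s) - 1)
      (-2 * Real.pi * Complex.I) 0 := by
    have : HasDerivAt (fun s : ℂ => Complex.exp (-2 * Real.pi * Complex.I * s))
        (-2 * Real.pi * Complex.I * Complex.exp (-2 * Real.pi * Complex.I * 0)) 0 := by
      have h1 : HasDerivAt (fun s : ℂ => -2 * Real.pi * Complex.I * s)
          (-2 * Real.pi * Complex.I) 0 := by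
        simpa using (hasDerivAt_id (0 : ℂ)).const_mul (-2 * Real.pi * Complex.I)
      simpa [mul_comm] using h1.cexp
    simpa using this.sub_const 1
  have hh : HasDerivAt (fun s : ℂ => ∑ k : Fin m, Complex.exp (-s * Complex.log (lam k)))
      (∑ k : Fin m, -Complex.log (lam k)) 0 := by
    refine HasDerivAt.fun_sum fun k _ => ?_
    have h1 : HasDerivAt (fun s : ℂ => -s * Complex.log (lam k))
          (-Complex.log (lam k)) 0 := by
      simpa [neg_mul] using ((hasDerivAt_id (0 : ℂ)).neg.mul_const (Complex.log (lam k)))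
    simpa [mul_comm] using h1.cexp
  have hg : HasDerivAt (fun s : ℂ => (Complex.exp (-2 * Real.pi * Complex.I * s) - 1) *
      ∑ k : Fin m, Complex.exp (-s * Complex.log (lam k)))
      (-2 * Real.pi * Complex.I * m) 0 := by
    have := hf.fun_mul hh
    simpa using this
  have hζ₂' : HasDerivAt ζ₂ (deriv ζ₁ 0 + -2 * Real.pi * Complex.I * m) 0 := by
    have h := (hζ₁.hasDerivAt.add hg)
    have : ζ₂ = fun s => ζ₁ s + (Complex.exp (-2 * Real.pi * Complex.I * s) - 1) *
        ∑ k : Fin m, Complex.exp (-s * Complex.log (lam k)) := funext hζ₂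
    rw [this]
    exact h
  refine ⟨hζ₂'.differentiableAt, ?_⟩
  rw [hζ₂'.deriv]
  rw [neg_add, Complex.exp_add]
  have : Complex.exp (-(-2 * Real.pi * Complex.I * m)) = 1 := by
    have : (-(-2 * Real.pi * Complex.I * m)) = (m : ℤ) * (2 * Real.pi * Complex.I) := by
      push_cast; ring
    rw [this, Complex.exp_int_mul_two_pi_mul_I]
  rw [this, mul_one]
end

section
/- Let T > 0 be real and define F : ℂ → ℂ by F(s) = 2 · exp(s · log(T/π)) · cos(πs/2) · ζ_R(s), where ζ_R is the Riemann zeta function and log(T/π) is the real logarithm. Then F is differentiable at 0, its derivative at 0 equals −log(2T), and consequently exp(−F′(0)) = 2T. -/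
open Complex Real

noncomputable def Efun : ℂ → ℂ := fun s => s * completedRiemannZeta₀ s - 1 - s * (1 - s)⁻¹
noncomputable def Gfun : ℂ → ℂ := fun s => 2 * ((π : ℂ) ^ (-s / 2) * Complex.Gamma (s / 2 + 1))

lemma zeta_eq_EG (s : ℂ) : riemannZeta s = Efun s / Gfun s := by
  rcases eq_or_ne s 0 with rfl | hs
  · norm_num [riemannZeta_zero, Efun, Gfun, Complex.Gamma_one]
  · rw [riemannZeta_def_of_ne_zero hs, completedRiemannZeta_eq]
    have h2 : Gfun s = s * Gammaℝ s := by
      rw [Gfun, Gammaℝ_def, Complex.Gamma_add_one _ (div_ne_zero hs two_ne_zero)]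
      ring
    rw [h2, Efun]
    rw [show s * completedRiemannZeta₀ s - 1 - s * (1 - s)⁻¹
        = s * (completedRiemannZeta₀ s - 1 / s - 1 / (1 - s)) by
      field_simp]
    rw [mul_div_mul_left _ _ hs]

lemma hasDerivAt_zeta_zero :
    HasDerivAt riemannZeta (-(Real.log (2 * π)) / 2 : ℝ) 0 := by
  have hE : HasDerivAt Efun (completedRiemannZeta₀ 0 - 1) 0 := by
    have h1 : HasDerivAt (fun s : ℂ => s * completedRiemannZeta₀ s)
        (completedRiemannZeta₀ 0) 0 := by
      have := (hasDerivAt_id (0:ℂ)).mul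
        (differentiable_completedZeta₀ 0).hasDerivAt
      exact this.congr_deriv (by simp)
    have h2 : HasDerivAt (fun s : ℂ => s * (1 - s)⁻¹) 1 0 := by
      have hd : HasDerivAt (fun s : ℂ => 1 - s) (-1) 0 :=
        (hasDerivAt_id (0:ℂ)).const_sub 1
      have := (hasDerivAt_id (0:ℂ)).div hd (by norm_num)
      exact (this.congr_deriv (by simp)).congr_of_eventuallyEq (f₁ := fun s : ℂ => s * (1 - s)⁻¹)
        (Filter.Eventually.of_forall fun s => by simp [div_eq_mul_inv])
    exact (h1.sub_const 1).sub h2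
  have hG : HasDerivAt Gfun (-(Real.log π) - Real.eulerMascheroniConstant : ℂ) 0 := by
    have hpow : HasDerivAt (fun s : ℂ => (π : ℂ) ^ (-s / 2))
        (-(Real.log π) / 2 : ℂ) 0 := by
      have hd : HasDerivAt (fun s : ℂ => -s / 2) (-1/2 : ℂ) 0 := by
        simpa using ((hasDerivAt_id (0:ℂ)).neg.div_const 2)
      have := hd.const_cpow (c := (π : ℂ))
        (Or.inl (by exact_mod_cast Real.pi_pos.ne'))
      simp only [neg_zero, zero_div, Complex.cpow_zero, one_mul] at this
      convert this using 1
      rw [Complex.ofReal_log Real.pi_pos.le]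
      ring
    have hGam : HasDerivAt (fun s : ℂ => Complex.Gamma (s / 2 + 1))
        (-(Real.eulerMascheroniConstant : ℂ) / 2) 0 := by
      have hd : HasDerivAt (fun s : ℂ => s / 2 + 1) (1/2 : ℂ) 0 := by
        simpa using (hasDerivAt_id (0:ℂ)).div_const 2 |>.add_const 1
      have h0 : ((0:ℂ)/2 + 1) = 1 := by norm_num
      have h' : HasDerivAt Complex.Gamma (-(Real.eulerMascheroniConstant:ℂ)) ((0:ℂ)/2+1) := by
        rw [h0]; exact Complex.hasDerivAt_Gamma_one
      have := h'.comp (0:ℂ) hd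
      exact this.congr_deriv (by ring)
    have := (hpow.mul hGam).const_mul (2 : ℂ)
    simp only [neg_zero, zero_div, Complex.cpow_zero, zero_add, Complex.Gamma_one,
      one_mul, mul_one] at this
    exact this.congr_deriv (by ring)
  have hEG : HasDerivAt (fun s => Efun s / Gfun s)
      (((completedRiemannZeta₀ 0 - 1) * Gfun 0
        - Efun 0 * (-(Real.log π) - Real.eulerMascheroniConstant)) / Gfun 0 ^ 2) 0 := by
    exact hE.div hG (by simp [Gfun, Complex.Gamma_one])
  have hfun : riemannZeta = fun s => Efun s / Gfun s := funext zeta_eq_EG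
  rw [hfun]
  convert hEG using 1
  have hG0 : Gfun 0 = 2 := by simp [Gfun, Complex.Gamma_one]
  have hE0 : Efun 0 = -1 := by simp [Efun]
  have hΛ0 : completedRiemannZeta₀ 0
      = (Real.eulerMascheroniConstant - Complex.log (4 * ↑π)) / 2 + 1 := by
    rw [show (0:ℂ) = 1 - 1 by ring, completedRiemannZeta₀_one_sub, completedRiemannZeta₀_one]
  have hlog : Complex.log (4 * ↑π) = ((2 * Real.log (2 * π) - Real.log π : ℝ) : ℂ) := by
    rw [show (4 : ℂ) * ↑π = ((4 * π : ℝ) : ℂ) by push_cast; ring,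
      ← Complex.ofReal_log (by positivity : (0:ℝ) ≤ 4 * π), Complex.ofReal_inj]
    rw [show (4:ℝ) * π = (2 * π) ^ 2 / π by field_simp; ring,
      Real.log_div (by positivity) Real.pi_pos.ne', Real.log_pow]
    push_cast; ring
  rw [hG0, hE0, hΛ0, hlog]
  push_cast
  ring

/-- The continued spectral zeta function `F(s) = 2 exp(s log(T/π)) cos(πs/2) ζ_R(s)`
of the undamped wave operator (branch cut on the negative real axis) is differentiable
at `0`, has `F′(0) = −log(2T)`, and the spectral determinant is `exp(−F′(0)) = 2T`. -/
theorem dwe_determinant_negative_axis_cut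
    (T : ℝ) (hT : 0 < T) (F : ℂ → ℂ)
    (hF : ∀ s : ℂ, F s =
      2 * Complex.exp (s * Real.log (T / Real.pi)) * Complex.cos (Real.pi * s / 2) *
        riemannZeta s) :
    DifferentiableAt ℂ F 0 ∧
      deriv F 0 = -Real.log (2 * T) ∧
      Complex.exp (-(deriv F 0)) = 2 * T := by
  set L : ℂ := (Real.log (T / Real.pi) : ℂ) with hL
  have h1 : HasDerivAt (fun s : ℂ => 2 * Complex.exp (s * L)) (2 * L) 0 := by
    have hlin : HasDerivAt (fun s : ℂ => s * L) L 0 := by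
      simpa using (hasDerivAt_id (0:ℂ)).mul_const L
    have he : HasDerivAt Complex.exp (Complex.exp ((0:ℂ) * L)) ((0:ℂ) * L) :=
      Complex.hasDerivAt_exp _
    have := (he.comp (0:ℂ) hlin).const_mul (2:ℂ)
    exact this.congr_deriv (by simp)
  have h2 : HasDerivAt (fun s : ℂ => Complex.cos ((π:ℂ) * s / 2)) 0 0 := by
    have hlin : HasDerivAt (fun s : ℂ => (π:ℂ) * s / 2) ((π:ℂ)/2) 0 := by
      simpa using ((hasDerivAt_id (0:ℂ)).const_mul (π:ℂ)).div_const 2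
    have hc : HasDerivAt Complex.cos (-Complex.sin ((π:ℂ) * 0 / 2)) ((π:ℂ) * 0 / 2) :=
      Complex.hasDerivAt_cos _
    have := hc.comp (0:ℂ) hlin
    exact this.congr_deriv (by simp)
  have hζ := hasDerivAt_zeta_zero
  have hFD : HasDerivAt F (-L - Real.log (2 * π)) 0 := by
    have hfun : F = fun s => (2 * Complex.exp (s * L) * Complex.cos ((π:ℂ) * s / 2)) *
        riemannZeta s := funext hF
    rw [hfun]
    have := (h1.mul h2).mul hζ
    refine this.congr_deriv ?_
    simp [riemannZeta_zero]
    push_cast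
    ring
  have hkey : Real.log (T / π) + Real.log (2 * π) = Real.log (2 * T) := by
    rw [Real.log_div hT.ne' Real.pi_pos.ne', Real.log_mul two_ne_zero Real.pi_pos.ne',
      Real.log_mul two_ne_zero hT.ne']
    ring
  have hderiv : deriv F 0 = -Real.log (2 * T) := by
    rw [hFD.deriv, ← hkey]
    push_cast
    ring
  refine ⟨hFD.differentiableAt, hderiv, ?_⟩
  rw [hderiv, neg_neg, ← Complex.ofReal_exp, Real.exp_log (by positivity)]
  push_cast
  ring
end

section
/- Let T > 0 be real and let s ∈ ℂ with Re s > 1. Then the series Σ_{j=1}^∞ [ exp(−s · (log(jπ/T) + iπ/2)) + exp(−s · (log(jπ/T) + 3iπ/2)) ], where log(jπ/T) is the real logarithm, converges and equals 2 · exp(−iπs) · exp(s · log(T/π)) · cos(πs/2) · ζ_R(s), where ζ_R is the Riemann zeta function. -/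
open Complex Real

lemma dwe_key (s u c : ℂ) :
    Complex.exp (-s * (u + Complex.I * c / 2)) +
      Complex.exp (-s * (u + 3 * Complex.I * c / 2)) =
    2 * Complex.exp (-(Complex.I * c * s)) * Complex.exp (-s * u) *
      Complex.cos (c * s / 2) := by
  rw [Complex.cos]
  rw [show (2:ℂ) * Complex.exp (-(Complex.I * c * s)) * Complex.exp (-s * u) *
      ((Complex.exp (c * s / 2 * Complex.I) + Complex.exp (-(c * s / 2) * Complex.I)) / 2)
      = Complex.exp (-(Complex.I * c * s)) * Complex.exp (-s * u) *
        Complex.exp (c * s / 2 * Complex.I) +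
        Complex.exp (-(Complex.I * c * s)) * Complex.exp (-s * u) *
        Complex.exp (-(c * s / 2) * Complex.I) from by ring]
  rw [← Complex.exp_add, ← Complex.exp_add, ← Complex.exp_add]
  congr 1 <;> ring

/-- For the undamped wave operator on an interval of length `T` (eigenvalues
`±(jπ/T)i`), with the branch cut on the positive real axis (arguments in `(0, 2π)`),
the spectral zeta series converges for `Re s > 1` and equals
`2 exp(−iπs) exp(s log(T/π)) cos(πs/2) ζ_R(s)`. -/
theorem dwe_zeta_series_positive_axis_cut
    (T : ℝ) (hT : 0 < T) (s : ℂ) (hs : 1 < s.re) :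
    HasSum
      (fun j : ℕ =>
        Complex.exp (-s * (Real.log (((j : ℝ) + 1) * Real.pi / T) +
          Complex.I * Real.pi / 2)) +
        Complex.exp (-s * (Real.log (((j : ℝ) + 1) * Real.pi / T) +
          3 * Complex.I * Real.pi / 2)))
      (2 * Complex.exp (-(Complex.I * Real.pi * s)) *
        Complex.exp (s * Real.log (T / Real.pi)) * Complex.cos (Real.pi * s / 2) *
        riemannZeta s) := by
  have hz : HasSum (fun n : ℕ => 1 / ((n : ℂ) + 1) ^ s) (riemannZeta s) := by
    have h1 : Summable (fun n : ℕ => 1 / ((n : ℂ) + 1) ^ s) := by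
      have h0 := (Complex.summable_one_div_nat_cpow (p := s)).mpr hs
      have h2 := (summable_nat_add_iff 1).mpr h0
      simpa using h2
    have h3 := h1.hasSum
    rwa [← zeta_eq_tsum_one_div_nat_add_one_cpow hs] at h3
  have hc := hz.mul_left (2 * Complex.exp (-(Complex.I * Real.pi * s)) *
      Complex.exp (s * Real.log (T / Real.pi)) * Complex.cos (Real.pi * s / 2))
  convert hc using 1
  · rfl
  funext j
  have hj : (0:ℝ) < (j : ℝ) + 1 := by positivity
  have hlog : Real.log (((j : ℝ) + 1) * Real.pi / T)
      = Real.log ((j : ℝ) + 1) - Real.log (T / Real.pi) := by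
    rw [Real.log_div (by positivity) hT.ne', Real.log_mul hj.ne' Real.pi_ne_zero,
      Real.log_div hT.ne' Real.pi_ne_zero]
    ring
  have hpow : (1 : ℂ) / ((j : ℂ) + 1) ^ s
      = Complex.exp (-s * Real.log ((j : ℝ) + 1)) := by
    have hcast : ((j : ℂ) + 1) = ((((j : ℝ) + 1) : ℝ) : ℂ) := by push_cast; ring
    rw [hcast, Complex.cpow_def_of_ne_zero (by exact_mod_cast hj.ne'),
      ← Complex.ofReal_log hj.le, one_div, ← Complex.exp_neg]
    congr 1
    ring
  rw [dwe_key, hlog, hpow]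
  push_cast
  rw [show -s * ((Real.log ((j : ℝ) + 1) : ℂ) - (Real.log (T / Real.pi) : ℂ))
      = -s * (Real.log ((j : ℝ) + 1) : ℂ) + s * (Real.log (T / Real.pi) : ℂ) from by ring,
    Complex.exp_add]
  ring
end

section
/- Let T > 0 be real and define G : ℂ → ℂ by G(s) = 2 · exp(−iπs) · exp(s · log(T/π)) · cos(πs/2) · ζ_R(s), where ζ_R is the Riemann zeta function and log(T/π) is the real logarithm. Then G is differentiable at 0, its derivative at 0 equals iπ − log(2T), and consequently exp(−G′(0)) = −2T. -/
open Complex Real Filter Topology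

local notation "γ" => Real.eulerMascheroniConstant

lemma aux_hasDerivAt_cos_pi_half :
    HasDerivAt (fun s : ℂ => Complex.cos (Real.pi * s / 2)) 0 0 := by
  have hin : HasDerivAt (fun s : ℂ => (Real.pi : ℂ) * s / 2) ((Real.pi : ℂ) / 2) 0 := by
    simpa using (((hasDerivAt_id (0 : ℂ)).const_mul (Real.pi : ℂ)).div_const 2)
  have := HasDerivAt.comp (h := fun s : ℂ => (Real.pi : ℂ) * s / 2) 0
    (by simpa using Complex.hasDerivAt_cos ((Real.pi : ℂ) * 0 / 2)) hin
  simpa [Function.comp_def] using this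

noncomputable def auxD (s : ℂ) : ℂ :=
  2 * (2 * (Real.pi : ℂ)) ^ (-s) * Complex.Gamma (s + 1) * Complex.cos (Real.pi * s / 2)

lemma auxD_zero : auxD 0 = 2 := by
  simp [auxD, Complex.Gamma_one]

lemma aux_hasDerivAt_D :
    HasDerivAt auxD (-2 * ((Real.log (2 * Real.pi) : ℂ) + (γ : ℂ))) 0 := by
  have h2pi : (2 * (Real.pi : ℂ)) ≠ 0 := by simp [Real.pi_ne_zero]
  have hA : HasDerivAt (fun s : ℂ => (2 * (Real.pi : ℂ)) ^ (-s))
      (-(Real.log (2 * Real.pi) : ℂ)) 0 := by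
    have := (hasDerivAt_neg' (0 : ℂ)).const_cpow (c := 2 * (Real.pi : ℂ)) (Or.inl h2pi)
    have hlog : Complex.log (2 * (Real.pi : ℂ)) = (Real.log (2 * Real.pi) : ℂ) := by
      rw [show (2 * (Real.pi : ℂ)) = ((2 * Real.pi : ℝ) : ℂ) by push_cast; ring,
        Complex.ofReal_log Real.two_pi_pos.le]
    simpa [hlog] using this
  have hB : HasDerivAt (fun s : ℂ => Complex.Gamma (s + 1)) (-(γ : ℂ)) 0 := by
    have := HasDerivAt.comp (h := fun s : ℂ => s + 1) 0
      (by simpa using Complex.hasDerivAt_Gamma_one) ((hasDerivAt_id 0).add_const 1)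
    simpa [Function.comp_def] using this
  have h := ((hA.const_mul 2).mul hB).mul aux_hasDerivAt_cos_pi_half
  have : auxD = fun s : ℂ =>
      2 * (2 * (Real.pi : ℂ)) ^ (-s) * Complex.Gamma (s + 1) * Complex.cos (Real.pi * s / 2) :=
    rfl
  rw [this]
  refine h.congr_deriv ?_
  simp only [neg_zero, Complex.cpow_zero, zero_add, Complex.Gamma_one, mul_zero, mul_one,
    Complex.ofReal_zero, zero_div, Complex.cos_zero, add_zero]
  ring

lemma aux_tendsto_zeta_one_sub :
    Tendsto (fun s : ℂ => riemannZeta (1 - s) + 1 / s) (𝓝[≠] 0) (𝓝 (γ : ℂ)) := by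
  have hmap : Tendsto (fun s : ℂ => 1 - s) (𝓝[≠] (0:ℂ)) (𝓝[≠] (1:ℂ)) := by
    refine tendsto_nhdsWithin_of_tendsto_nhds_of_eventually_within _ ?_ ?_
    · have : Tendsto (fun s : ℂ => 1 - s) (𝓝 0) (𝓝 1) := by
        have h' : Tendsto (fun s : ℂ => 1 - s) (𝓝 0) _ :=
          (continuous_const.sub continuous_id).tendsto (0 : ℂ)
        simpa using h'
      exact this.mono_left nhdsWithin_le_nhds
    · filter_upwards [self_mem_nhdsWithin] with s hs
      simp only [Set.mem_compl_iff, Set.mem_singleton_iff] at hs ⊢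
      intro h
      apply hs
      have := sub_eq_self.mp h
      simpa using this.symm ▸ rfl
  have := tendsto_riemannZeta_sub_one_div.comp hmap
  refine this.congr (fun s => ?_)
  simp only [Function.comp_apply]
  have : (1 : ℂ) - s - 1 = -s := by ring
  rw [this, one_div, inv_neg, ← one_div, sub_neg_eq_add]

lemma aux_hasDerivAt_zeta :
    HasDerivAt riemannZeta (-(Real.log (2 * Real.pi) : ℂ) / 2) 0 := by
  rw [hasDerivAt_iff_tendsto_slope]
  -- limit of the auxiliary expression
  have hDslope : Tendsto (fun s : ℂ => (auxD s - 2) / s) (𝓝[≠] 0)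
      (𝓝 (-2 * ((Real.log (2 * Real.pi) : ℂ) + (γ : ℂ)))) := by
    have := hasDerivAt_iff_tendsto_slope.mp aux_hasDerivAt_D
    refine this.congr (fun s => ?_)
    rw [slope_def_field, auxD_zero, sub_zero]
  have hDcont : Tendsto auxD (𝓝[≠] 0) (𝓝 2) := by
    simpa [auxD_zero] using
      (aux_hasDerivAt_D.continuousAt.continuousWithinAt (s := {(0:ℂ)}ᶜ)).tendsto
  have hF : Tendsto (fun s : ℂ =>
      ((riemannZeta (1 - s) + 1 / s) + (auxD s - 2) / s / 2) / auxD s) (𝓝[≠] 0)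
      (𝓝 ((((γ : ℂ)) + (-2 * ((Real.log (2 * Real.pi) : ℂ) + (γ : ℂ))) / 2) / 2)) :=
    (aux_tendsto_zeta_one_sub.add (hDslope.div_const 2)).div hDcont two_ne_zero
  have hval : ((((γ : ℂ)) + (-2 * ((Real.log (2 * Real.pi) : ℂ) + (γ : ℂ))) / 2) / 2)
      = -(Real.log (2 * Real.pi) : ℂ) / 2 := by ring
  rw [hval] at hF
  refine hF.congr' ?_
  have hball : Metric.ball (0:ℂ) 1 ∈ 𝓝 (0:ℂ) := Metric.ball_mem_nhds 0 one_pos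
  filter_upwards [self_mem_nhdsWithin, eventually_nhdsWithin_of_eventually_nhds
    (eventually_of_mem hball (fun x hx => hx))] with s hs0 hsball
  have hs0' : s ≠ 0 := by simpa using hs0
  have hsn : ‖s‖ < 1 := by simpa using hsball
  -- s avoids the nonpositive integers
  have hnat : ∀ n : ℕ, s ≠ -(n : ℂ) := by
    intro n h
    rcases Nat.eq_zero_or_pos n with h0 | h1
    · rw [h0] at h; simp at h; exact hs0' h
    · apply absurd hsn
      rw [h]
      push_neg
      simp only [norm_neg, Complex.norm_natCast]
      exact_mod_cast h1
  have hs1 : s ≠ 1 := by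
    intro h; rw [h] at hsn; simp at hsn
  have FE := riemannZeta_one_sub hnat hs1
  -- nonvanishing facts
  have hcpow : (2 * (Real.pi : ℂ)) ^ (-s) ≠ 0 := by
    rw [Ne, Complex.cpow_eq_zero_iff]
    simp [Real.pi_ne_zero]
  have hGam : Complex.Gamma s ≠ 0 := Complex.Gamma_ne_zero hnat
  have hcos : Complex.cos ((Real.pi : ℂ) * s / 2) ≠ 0 := by
    rw [Complex.cos_ne_zero_iff]
    intro k h
    have hpi : ((Real.pi : ℂ)) ≠ 0 := by simpa using Real.pi_ne_zero
    have h2 : (Real.pi : ℂ) * s = (Real.pi : ℂ) * (2 * (k : ℂ) + 1) := by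
      linear_combination 2 * h
    have hs' : s = 2 * (k : ℂ) + 1 := mul_left_cancel₀ hpi h2
    apply absurd hsn
    rw [hs']
    push_neg
    have : (2 * (k : ℂ) + 1) = ((2 * k + 1 : ℤ) : ℂ) := by push_cast; ring
    rw [this, Complex.norm_intCast]
    have : (2 * k + 1 : ℤ) ≠ 0 := by omega
    exact_mod_cast Int.one_le_abs this
  have hslope : slope riemannZeta 0 s = (riemannZeta s - (-1/2)) / s := by
    rw [slope_def_field, riemannZeta_zero, sub_zero]
  rw [hslope, FE]
  have hDs : auxD s = s * (2 * (2 * (Real.pi : ℂ)) ^ (-s) * Complex.Gamma s *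
      Complex.cos ((Real.pi : ℂ) * s / 2)) := by
    rw [auxD, Complex.Gamma_add_one s hs0']
    ring
  rw [hDs]
  set X := 2 * (2 * (Real.pi : ℂ)) ^ (-s) * Complex.Gamma s * Complex.cos ((Real.pi : ℂ) * s / 2)
    with hXdef
  have hX : X ≠ 0 := by
    rw [hXdef]
    exact mul_ne_zero (mul_ne_zero (mul_ne_zero two_ne_zero hcpow) hGam) hcos
  field_simp
  ring

/-- The continued spectral zeta function
`G(s) = 2 exp(−iπs) exp(s log(T/π)) cos(πs/2) ζ_R(s)` of the undamped wave operator
(branch cut on the positive real axis) is differentiable at `0`, has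
`G′(0) = iπ − log(2T)`, and the spectral determinant is `exp(−G′(0)) = −2T`. -/
theorem dwe_determinant_positive_axis_cut
    (T : ℝ) (hT : 0 < T) (G : ℂ → ℂ)
    (hG : ∀ s : ℂ, G s =
      2 * Complex.exp (-(Complex.I * Real.pi * s)) *
        Complex.exp (s * Real.log (T / Real.pi)) * Complex.cos (Real.pi * s / 2) *
        riemannZeta s) :
    DifferentiableAt ℂ G 0 ∧
      deriv G 0 = Complex.I * Real.pi - Real.log (2 * T) ∧
      Complex.exp (-(deriv G 0)) = -(2 * T) := by
  have hGfun : G = fun s : ℂ =>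
      2 * Complex.exp (-(Complex.I * Real.pi * s)) *
        Complex.exp (s * Real.log (T / Real.pi)) * Complex.cos (Real.pi * s / 2) *
        riemannZeta s := funext hG
  have hE1 : HasDerivAt (fun s : ℂ => Complex.exp (-(Complex.I * Real.pi * s)))
      (-(Complex.I * Real.pi)) 0 := by
    have hin : HasDerivAt (fun s : ℂ => -(Complex.I * Real.pi * s)) (-(Complex.I * Real.pi)) 0 := by
      have h' : HasDerivAt (fun s : ℂ => -(Complex.I * Real.pi * s)) _ 0 :=
        (((hasDerivAt_id (0 : ℂ)).const_mul (Complex.I * Real.pi)).neg)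
      simpa using h'
    simpa using hin.cexp
  have hE2 : HasDerivAt (fun s : ℂ => Complex.exp (s * (Real.log (T / Real.pi) : ℂ)))
      ((Real.log (T / Real.pi) : ℂ)) 0 := by
    have hin : HasDerivAt (fun s : ℂ => s * (Real.log (T / Real.pi) : ℂ))
        ((Real.log (T / Real.pi) : ℂ)) 0 := by
      simpa using (hasDerivAt_id (0 : ℂ)).mul_const ((Real.log (T / Real.pi) : ℂ))
    simpa using hin.cexp
  have hD : HasDerivAt G
      (Complex.I * Real.pi - (Real.log (2 * T) : ℂ)) 0 := by
    have h := (((hE1.const_mul 2).mul hE2).mul aux_hasDerivAt_cos_pi_half).mul aux_hasDerivAt_zeta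
    rw [hGfun]
    refine h.congr_deriv ?_
    have hlog : (Real.log (2 * T) : ℂ) = (Real.log (T / Real.pi) : ℂ) +
        (Real.log (2 * Real.pi) : ℂ) := by
      rw [← Complex.ofReal_add]
      congr 1
      rw [Real.log_div hT.ne' Real.pi_ne_zero, Real.log_mul two_ne_zero hT.ne',
        Real.log_mul two_ne_zero Real.pi_ne_zero]
      ring
    rw [hlog]
    simp only [mul_zero, neg_zero, Complex.exp_zero, zero_mul, Complex.ofReal_zero, zero_div,
      Complex.cos_zero, mul_one, one_mul, riemannZeta_zero, mul_zero, add_zero, Pi.mul_apply]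
    ring
  refine ⟨hD.differentiableAt, ?_, ?_⟩
  · exact hD.deriv
  · rw [hD.deriv]
    have : -(Complex.I * (Real.pi : ℂ) - (Real.log (2 * T) : ℂ)) =
        (Real.log (2 * T) : ℂ) + (Real.pi : ℂ) * (-Complex.I) := by ring
    rw [this, Complex.exp_add]
    rw [← Complex.ofReal_exp, Real.exp_log (by positivity)]
    rw [show ((Real.pi : ℂ) * -Complex.I) = -((Real.pi : ℂ) * Complex.I) by ring,
      Complex.exp_neg, Complex.exp_pi_mul_I]
    push_cast
    ring
end

section
/- Let N ∈ ℕ, let α : Fin N → ℝ, let c₁ > 0 and c₂ > 0 be real, let ℓ ∈ ℕ with 1 ≤ ℓ ≤ N + 1, define θ_k = α_k + 2π for the first ℓ − 1 indices k and θ_k = α_k otherwise, and define F_ℓ : ℂ → ℂ by F_ℓ(s) = exp(−s · log c₁) · ζ_R(c₂ · s) · Σ_{k=0}^{N−1} exp(−i·θ_k·s), where ζ_R is the Riemann zeta function. Then F_ℓ is differentiable at 0 and F_ℓ′(0) = (N/2)·log c₁ − (N·c₂/2)·log(2π) + iπ(ℓ − 1) + (i/2)·Σ_{k=0}^{N−1}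 α_k. -/
open Complex Real

local notation "γ" => Real.eulerMascheroniConstant

noncomputable def Hzeta : ℂ → ℂ := fun s =>
  (s * completedRiemannZeta₀ s - 1 - s / (1 - s)) *
    ((Real.pi : ℂ) ^ (s / 2) * (Complex.Gamma (s / 2 + 1))⁻¹) / 2

lemma hasDerivAt_Hzeta :
    HasDerivAt Hzeta ((-(Real.log (2 * Real.pi)) / 2 : ℝ) : ℂ) 0 := by
  have h1 : HasDerivAt (fun s : ℂ => s * completedRiemannZeta₀ s)
      (completedRiemannZeta₀ 0) 0 := by
    have := (hasDerivAt_id (0:ℂ)).fun_mul (differentiable_completedZeta₀ 0).hasDerivAt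
    simpa using this
  have h2 : HasDerivAt (fun s : ℂ => s / (1 - s)) 1 0 := by
    have := (hasDerivAt_id (0:ℂ)).fun_div ((hasDerivAt_const (0:ℂ) 1).fun_sub (hasDerivAt_id 0))
      (by norm_num)
    simpa using this
  have hn : HasDerivAt (fun s : ℂ => s * completedRiemannZeta₀ s - 1 - s / (1 - s))
      (completedRiemannZeta₀ 0 - 1) 0 := (h1.sub_const 1).sub h2
  have hπ : HasDerivAt (fun s : ℂ => (Real.pi : ℂ) ^ (s / 2))
      (((Real.log Real.pi : ℝ) : ℂ) / 2) 0 := by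
    have := ((hasDerivAt_id (0:ℂ)).div_const 2).const_cpow (c := (Real.pi : ℂ))
      (Or.inl (by exact_mod_cast Real.pi_pos.ne'))
    simp only [zero_div, cpow_zero, one_mul, id_eq] at this
    rw [ofReal_log Real.pi_pos.le, ← mul_one_div]
    exact this
  have hΓ : HasDerivAt (fun s : ℂ => Complex.Gamma (s / 2 + 1)) (-(γ:ℂ) / 2) 0 := by
    have hin : HasDerivAt (fun s : ℂ => s / 2 + 1) (1/2 : ℂ) 0 :=
      ((hasDerivAt_id (0:ℂ)).div_const 2).add_const 1
    have hg : HasDerivAt Complex.Gamma (-(γ:ℂ)) ((fun s : ℂ => s / 2 + 1) 0) := by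
      rw [show (fun s : ℂ => s / 2 + 1) 0 = 1 by norm_num]
      exact Complex.hasDerivAt_Gamma_one
    have := hg.comp (0:ℂ) hin
    exact this.congr_deriv (by ring)
  have hΓinv : HasDerivAt (fun s : ℂ => (Complex.Gamma (s / 2 + 1))⁻¹) ((γ:ℂ) / 2) 0 := by
    have := hΓ.fun_inv (by simp [Complex.Gamma_one])
    rw [show (0:ℂ)/2 + 1 = 1 by norm_num] at this
    simp only [Complex.Gamma_one, one_pow, div_one, neg_div, neg_neg] at this
    convert this using 1
  have hG : HasDerivAt (fun s : ℂ => (Real.pi : ℂ) ^ (s / 2) * (Complex.Gamma (s / 2 + 1))⁻¹)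
      (((Real.log Real.pi : ℝ) : ℂ) / 2 + (γ:ℂ) / 2) 0 := by
    have := hπ.fun_mul hΓinv
    rw [show (0:ℂ)/2 + 1 = 1 by norm_num] at this
    simpa [Complex.Gamma_one] using this
  have hH := (hn.fun_mul hG).div_const 2
  have hΛ0 : completedRiemannZeta₀ 0 = ((γ - Real.log (4 * Real.pi)) / 2 : ℝ) + 1 := by
    have h := completedRiemannZeta₀_one_sub 1
    simp only [sub_self] at h
    rw [h, completedRiemannZeta₀_one,
      show ((4:ℂ) * ↑Real.pi) = ((4 * Real.pi : ℝ) : ℂ) by push_cast; ring, ofReal_div, ofReal_sub,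
      ofReal_log (by positivity : (0:ℝ) ≤ 4 * Real.pi)]
    push_cast
    ring
  rw [show Hzeta = (fun s : ℂ => (s * completedRiemannZeta₀ s - 1 - s / (1 - s)) *
    ((Real.pi : ℂ) ^ (s / 2) * (Complex.Gamma (s / 2 + 1))⁻¹) / 2) from rfl]
  refine hH.congr_deriv ?_
  rw [show (0:ℂ)/2 + 1 = 1 by norm_num]
  simp only [hΛ0, zero_div, cpow_zero, zero_mul, zero_sub, Complex.Gamma_one, inv_one, mul_one,
    one_mul, sub_zero, zero_add]
  have hlog : Real.log (4 * Real.pi) + Real.log Real.pi = 2 * Real.log (2 * Real.pi) := by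
    rw [← Real.log_mul (by positivity) Real.pi_pos.ne',
      show (4 * Real.pi) * Real.pi = (2 * Real.pi) ^ 2 by ring, Real.log_pow]
    push_cast; ring
  have hc := congrArg (fun x : ℝ => (x : ℂ)) hlog
  push_cast at hc ⊢
  linear_combination (-1/4 : ℂ) * hc

lemma hasDerivAt_riemannZeta_zero :
    HasDerivAt riemannZeta ((-(Real.log (2 * Real.pi)) / 2 : ℝ) : ℂ) 0 := by
  apply hasDerivAt_Hzeta.congr_of_eventuallyEq
  have hball : Metric.ball (0:ℂ) 1 ∈ nhds (0:ℂ) := Metric.ball_mem_nhds 0 one_pos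
  filter_upwards [hball] with s hs
  rcases eq_or_ne s 0 with rfl | hs0
  · rw [riemannZeta_zero]
    norm_num [Hzeta, Complex.Gamma_one]
  · rw [riemannZeta_def_of_ne_zero hs0, Hzeta]
    have habs : ‖s‖ < 1 := by simpa [Complex.dist_eq] using hs
    have hre : 0 < (s / 2 + 1).re := by
      have h1 : |s.re| < 1 := lt_of_le_of_lt (Complex.abs_re_le_norm s) habs
      have : (s / 2 + 1).re = s.re / 2 + 1 := by
        simp [Complex.add_re, Complex.div_re, Complex.one_re]
      rw [this]
      linarith [abs_lt.mp h1 |>.1]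
    have hΓne : Complex.Gamma (s / 2 + 1) ≠ 0 := Complex.Gamma_ne_zero_of_re_pos hre
    have hπne : (Real.pi : ℂ) ^ (s / 2) ≠ 0 := by
      rw [Complex.cpow_def_of_ne_zero (by exact_mod_cast Real.pi_pos.ne')]
      exact Complex.exp_ne_zero _
    have h1s : (1 : ℂ) - s ≠ 0 := by
      rw [sub_ne_zero]
      intro h
      rw [← h] at habs
      simp at habs
    rw [completedRiemannZeta_eq, Gammaℝ_def]
    have hΓrec : Complex.Gamma (s / 2) = Complex.Gamma (s / 2 + 1) / (s / 2) := by
      rw [Complex.Gamma_add_one _ (by simpa using hs0)]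
      field_simp
    rw [hΓrec, show -s/2 = -(s/2) from neg_div 2 s, div_eq_mul_inv, mul_inv,
      Complex.cpow_neg, inv_inv, inv_div]
    have hA : (completedRiemannZeta₀ s - 1/s - 1/(1-s)) * (s/2) =
        (s * completedRiemannZeta₀ s - 1 - s/(1-s))/2 := by
      field_simp
    linear_combination ((Real.pi : ℂ)^(s/2) * (Complex.Gamma (s/2+1))⁻¹) * hA


/-- The continued spectral zeta function
`F_ℓ(s) = exp(−s log c₁) ζ_R(c₂ s) Σ_k exp(−iθ_k s)` for eigenvalues with power growth
on `N` rays is differentiable at `0` with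
`F_ℓ′(0) = (N/2) log c₁ − (N c₂/2) log(2π) + iπ(ℓ−1) + (i/2) Σ_k α_k`. -/
theorem power_growth_zeta_deriv_at_zero
    (N : ℕ) (α : Fin N → ℝ) (c₁ c₂ : ℝ) (hc₁ : 0 < c₁) (hc₂ : 0 < c₂)
    (ℓ : ℕ) (hℓ₁ : 1 ≤ ℓ) (hℓ₂ : ℓ ≤ N + 1)
    (θ : Fin N → ℝ)
    (hθ : ∀ k : Fin N, θ k = if (k : ℕ) < ℓ - 1 then α k + 2 * Real.pi else α k)
    (F : ℂ → ℂ)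
    (hF : ∀ s : ℂ, F s = Complex.exp (-s * Real.log c₁) * riemannZeta (c₂ * s) *
      ∑ k : Fin N, Complex.exp (-(Complex.I * θ k * s))) :
    DifferentiableAt ℂ F 0 ∧
      deriv F 0 = (N : ℂ) / 2 * Real.log c₁ - (N : ℂ) * c₂ / 2 * Real.log (2 * Real.pi) +
        Complex.I * Real.pi * ((ℓ : ℂ) - 1) + Complex.I / 2 * ∑ k : Fin N, (α k : ℂ) := by
  have hFe : F = fun s : ℂ => Complex.exp (-s * Real.log c₁) * riemannZeta (c₂ * s) *
      ∑ k : Fin N, Complex.exp (-(Complex.I * θ k * s)) := funext hF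
  -- derivative of each factor
  have hg : HasDerivAt (fun s : ℂ => Complex.exp (-s * Real.log c₁))
      (-(Real.log c₁ : ℂ)) 0 := by
    have hin : HasDerivAt (fun s : ℂ => -s * (Real.log c₁ : ℂ)) (-(Real.log c₁ : ℂ)) 0 := by
      have := (hasDerivAt_id (0:ℂ)).neg.mul_const ((Real.log c₁ : ℝ) : ℂ)
      simpa using this
    have := hin.cexp
    simpa using this
  have hh : HasDerivAt (fun s : ℂ => riemannZeta ((c₂ : ℂ) * s))
      ((c₂ : ℂ) * ((-(Real.log (2 * Real.pi)) / 2 : ℝ) : ℂ)) 0 := by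
    have hin : HasDerivAt (fun s : ℂ => (c₂ : ℂ) * s) ((c₂ : ℂ)) 0 := by
      simpa using (hasDerivAt_id (0:ℂ)).const_mul ((c₂ : ℝ) : ℂ)
    have hz : HasDerivAt riemannZeta ((-(Real.log (2 * Real.pi)) / 2 : ℝ) : ℂ)
        ((fun s : ℂ => (c₂ : ℂ) * s) 0) := by
      rw [show (fun s : ℂ => (c₂ : ℂ) * s) 0 = 0 by simp]
      exact hasDerivAt_riemannZeta_zero
    have := hz.comp (0:ℂ) hin
    exact this.congr_deriv (by ring)
  have hp : HasDerivAt (fun s : ℂ => ∑ k : Fin N, Complex.exp (-(Complex.I * θ k * s)))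
      (∑ k : Fin N, -(Complex.I * (θ k : ℂ))) 0 := by
    apply HasDerivAt.fun_sum
    intro k _
    have hin : HasDerivAt (fun s : ℂ => -(Complex.I * (θ k : ℂ) * s))
        (-(Complex.I * (θ k : ℂ))) 0 := by
      have := ((hasDerivAt_id (0:ℂ)).const_mul (Complex.I * (θ k : ℂ))).fun_neg
      simpa using this
    have := hin.cexp
    simpa using this
  have hprod := (hg.fun_mul hh).fun_mul hp
  -- value of factors at 0
  have hps : (∑ k : Fin N, Complex.exp (-(Complex.I * (θ k : ℂ) * 0))) = (N : ℂ) := by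
    simp
  constructor
  · rw [hFe]; exact hprod.differentiableAt
  · rw [hFe, hprod.deriv]
    have hsumθ : (∑ k : Fin N, ((θ k : ℝ) : ℂ)) =
        (∑ k : Fin N, (α k : ℂ)) + 2 * Real.pi * ((ℓ : ℂ) - 1) := by
      have hcard : (Finset.univ.filter (fun k : Fin N => (k:ℕ) < ℓ - 1)).card = ℓ - 1 := by
        have h : ℓ - 1 ≤ N := by omega
        have : (Finset.univ.filter (fun k : Fin N => (k:ℕ) < ℓ - 1)) =
            (Finset.range (ℓ - 1)).attachFin
              (fun x hx => (Finset.mem_range.mp hx).trans_le h) := by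
          ext k
          simp [Finset.mem_attachFin]
        rw [this, Finset.card_attachFin, Finset.card_range]
      calc (∑ k : Fin N, ((θ k : ℝ) : ℂ))
          = ∑ k : Fin N, ((α k : ℂ) +
            if (k : ℕ) < ℓ - 1 then ((2 * Real.pi : ℝ) : ℂ) else 0) := by
            refine Finset.sum_congr rfl (fun k _ => ?_)
            rw [hθ k]
            split <;> push_cast <;> ring
        _ = (∑ k : Fin N, (α k : ℂ)) + ((ℓ - 1 : ℕ) : ℂ) * ((2 * Real.pi : ℝ) : ℂ) := by
            rw [Finset.sum_add_distrib, ← Finset.sum_filter, Finset.sum_const, hcard,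
              nsmul_eq_mul]
        _ = (∑ k : Fin N, (α k : ℂ)) + 2 * Real.pi * ((ℓ : ℂ) - 1) := by
            have : ((ℓ - 1 : ℕ) : ℂ) = (ℓ : ℂ) - 1 := by
              push_cast [Nat.cast_sub hℓ₁]; ring
            rw [this]; push_cast; ring
    have hsum2 : (∑ k : Fin N, -(Complex.I * (θ k : ℂ))) =
        -(Complex.I * ((∑ k : Fin N, (α k : ℂ)) + 2 * Real.pi * ((ℓ : ℂ) - 1))) := by
      rw [← hsumθ, Finset.mul_sum, ← Finset.sum_neg_distrib]
    simp only [mul_zero, zero_mul, neg_zero, neg_mul, Complex.exp_zero, one_mul, mul_one,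
      riemannZeta_zero, hsum2, Finset.sum_const, Finset.card_univ, Fintype.card_fin,
      nsmul_eq_mul]
    push_cast
    ring
end

section
/- Let c₁ > 0, c₂ > 0, and α be real, and define F : ℂ → ℂ by F(s) = exp(−s·(log c₁ + iα)) / (exp(c₂·s) − 1). Then the real part of −F′(s), evaluated along real s, tends to +∞ as s → 0 from the right; consequently the modulus of exp(−F′(s)) tends to +∞ as s → 0⁺ along the reals. In words: for a ray of exponentially growing eigenvalues, the spectral determinant exp(−ζ′(0)) diverges to +∞ and cannot be defined. -/
open Complex Real Filter

set_option maxHeartbeats 1000000 in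
/-- For a ray of exponentially growing eigenvalues, with
`F(s) = exp(−s(log c₁ + iα)) / (exp(c₂ s) − 1)` the continuation of the spectral
zeta function, the real part of `−F′(s)` tends to `+∞` as `s → 0⁺` along the reals;
consequently `|exp(−F′(s))| → +∞`, so the spectral determinant diverges to `+∞`. -/
theorem exponential_growth_determinant_diverges
    (c₁ c₂ α : ℝ) (hc₁ : 0 < c₁) (hc₂ : 0 < c₂)
    (F : ℂ → ℂ)
    (hF : ∀ s : ℂ, F s = Complex.exp (-s * (Real.log c₁ + Complex.I * α)) /
      (Complex.exp (c₂ * s) - 1)) :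
    Tendsto (fun s : ℝ => (-(deriv F (s : ℂ))).re)
      (nhdsWithin 0 (Set.Ioi (0 : ℝ))) atTop ∧
    Tendsto (fun s : ℝ => ‖Complex.exp (-(deriv F (s : ℂ)))‖)
      (nhdsWithin 0 (Set.Ioi (0 : ℝ))) atTop := by
  set a : ℂ := (Real.log c₁ : ℂ) + Complex.I * α with ha
  have hc₂' : (c₂ : ℂ) ≠ 0 := by exact_mod_cast hc₂.ne'
  have hFeq : F = fun s : ℂ => Complex.exp (-s * a) / (Complex.exp ((c₂:ℂ) * s) - 1) := by
    funext s; exact hF s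
  -- for real s > 0, exp(c₂ s) ≠ 1
  have hne : ∀ s : ℝ, 0 < s → Complex.exp ((c₂:ℂ) * s) ≠ 1 := by
    intro s hs
    have heq : Complex.exp ((c₂:ℂ) * s) = (Real.exp (c₂ * s) : ℂ) := by
      rw [Complex.ofReal_exp, Complex.ofReal_mul]
    rw [heq]
    intro h
    have h2 : Real.exp (c₂ * s) = 1 := by exact_mod_cast h
    nlinarith [Real.add_one_le_exp (c₂ * s), mul_pos hc₂ hs]
  -- derivative formula
  have hderiv : ∀ s : ℂ, Complex.exp ((c₂:ℂ) * s) ≠ 1 →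
      deriv F s = (-a * Complex.exp (-s*a) * (Complex.exp ((c₂:ℂ)*s) - 1)
        - Complex.exp (-s*a) * ((c₂:ℂ) * Complex.exp ((c₂:ℂ)*s)))
        / (Complex.exp ((c₂:ℂ)*s) - 1)^2 := by
    intro s hs
    have h1 : HasDerivAt (fun s : ℂ => Complex.exp (-s*a)) (-a * Complex.exp (-s*a)) s := by
      have h0 : HasDerivAt (fun s : ℂ => -s * a) (-a) s := by
        simpa using ((hasDerivAt_id s).neg.mul_const a)
      simpa [mul_comm, Function.comp_def] using (Complex.hasDerivAt_exp (-s*a)).comp s h0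
    have h2 : HasDerivAt (fun s : ℂ => Complex.exp ((c₂:ℂ)*s) - 1)
        ((c₂:ℂ) * Complex.exp ((c₂:ℂ)*s)) s := by
      have h0 : HasDerivAt (fun s : ℂ => (c₂:ℂ) * s) ((c₂:ℂ)) s := by
        simpa using ((hasDerivAt_id s).const_mul (c₂:ℂ))
      simpa [mul_comm] using ((Complex.hasDerivAt_exp ((c₂:ℂ)*s)).comp s h0).sub_const 1
    have hd : Complex.exp ((c₂:ℂ)*s) - 1 ≠ 0 := sub_ne_zero.mpr hs
    rw [hFeq]
    exact (h1.div h2 hd).deriv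
  -- Q s = s / (exp(c₂ s) - 1) tends to 1/c₂
  have hQ : Tendsto (fun s : ℝ => (s:ℂ) / (Complex.exp ((c₂:ℂ)*s) - 1))
      (nhdsWithin 0 (Set.Ioi (0:ℝ))) (nhds ((c₂:ℂ)⁻¹)) := by
    have hE : Tendsto (fun z : ℂ => (Complex.exp z - 1)/z)
        (nhdsWithin 0 {(0:ℂ)}ᶜ) (nhds 1) := by
      have := hasDerivAt_iff_tendsto_slope.mp (Complex.hasDerivAt_exp 0)
      simp only [Complex.exp_zero] at this
      refine this.congr (fun z => ?_)
      simp [slope_def_field, div_eq_inv_mul]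
    have hφ : Tendsto (fun s : ℝ => (c₂:ℂ) * s)
        (nhdsWithin 0 (Set.Ioi (0:ℝ))) (nhdsWithin 0 {(0:ℂ)}ᶜ) := by
      apply tendsto_nhdsWithin_of_tendsto_nhds_of_eventually_within
      · have : Continuous fun s : ℝ => (c₂:ℂ) * s := by fun_prop
        simpa using (this.tendsto 0).mono_left nhdsWithin_le_nhds
      · filter_upwards [self_mem_nhdsWithin] with s hs
        simp only [Set.mem_compl_iff, Set.mem_singleton_iff]
        exact mul_ne_zero hc₂' (by exact_mod_cast (ne_of_gt hs))
    have h1 : Tendsto (fun s : ℝ => (Complex.exp ((c₂:ℂ)*s) - 1)/((c₂:ℂ)*s))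
        (nhdsWithin 0 (Set.Ioi (0:ℝ))) (nhds 1) := hE.comp hφ
    have h2 : Tendsto (fun s : ℝ => ((c₂:ℂ)*s)/(Complex.exp ((c₂:ℂ)*s) - 1))
        (nhdsWithin 0 (Set.Ioi (0:ℝ))) (nhds 1) := by
      have := h1.inv₀ one_ne_zero
      simpa [inv_div] using this
    have h3 := h2.const_mul ((c₂:ℂ)⁻¹)
    simp only [mul_one] at h3
    refine h3.congr (fun s => ?_)
    field_simp
  -- L s = s² · (−F′(s)) tends to 1/c₂
  have hL : Tendsto (fun s : ℝ => ((s:ℂ)^2 * (-(deriv F (s:ℂ)))).re)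
      (nhdsWithin 0 (Set.Ioi (0:ℝ))) (nhds (c₂⁻¹)) := by
    have hG : Tendsto (fun s : ℝ => Complex.exp (-(s:ℂ)*a) *
        (a * s * ((s:ℂ) / (Complex.exp ((c₂:ℂ)*s) - 1))
          + (c₂:ℂ) * Complex.exp ((c₂:ℂ)*s) * ((s:ℂ) / (Complex.exp ((c₂:ℂ)*s) - 1))^2))
        (nhdsWithin 0 (Set.Ioi (0:ℝ))) (nhds ((c₂:ℂ)⁻¹)) := by
      have hcont : ∀ (f : ℝ → ℂ), Continuous f →
          Tendsto f (nhdsWithin 0 (Set.Ioi (0:ℝ))) (nhds (f 0)) :=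
        fun f hf => (hf.tendsto 0).mono_left nhdsWithin_le_nhds
      have t1 : Tendsto (fun s : ℝ => Complex.exp (-(s:ℂ)*a))
          (nhdsWithin 0 (Set.Ioi (0:ℝ))) (nhds 1) := by
        have := hcont (fun s : ℝ => Complex.exp (-(s:ℂ)*a)) (by fun_prop)
        simpa using this
      have t2 : Tendsto (fun s : ℝ => a * (s:ℂ))
          (nhdsWithin 0 (Set.Ioi (0:ℝ))) (nhds 0) := by
        have := hcont (fun s : ℝ => a * (s:ℂ)) (by fun_prop)
        simpa using this
      have t3 : Tendsto (fun s : ℝ => (c₂:ℂ) * Complex.exp ((c₂:ℂ)*s))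
          (nhdsWithin 0 (Set.Ioi (0:ℝ))) (nhds ((c₂:ℂ))) := by
        have := hcont (fun s : ℝ => (c₂:ℂ) * Complex.exp ((c₂:ℂ)*s)) (by fun_prop)
        simpa using this
      have := t1.mul ((t2.mul hQ).add (t3.mul (hQ.pow 2)))
      have heq : (1:ℂ) * ((0:ℂ) * (c₂:ℂ)⁻¹ + (c₂:ℂ) * ((c₂:ℂ)⁻¹)^2) = (c₂:ℂ)⁻¹ := by
        field_simp
        ring
      rw [heq] at this
      exact this
    have heq : ∀ᶠ s : ℝ in nhdsWithin 0 (Set.Ioi (0:ℝ)),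
        ((s:ℂ)^2 * (-(deriv F (s:ℂ)))) = Complex.exp (-(s:ℂ)*a) *
        (a * s * ((s:ℂ) / (Complex.exp ((c₂:ℂ)*s) - 1))
          + (c₂:ℂ) * Complex.exp ((c₂:ℂ)*s) * ((s:ℂ) / (Complex.exp ((c₂:ℂ)*s) - 1))^2) := by
      filter_upwards [self_mem_nhdsWithin] with s hs
      have hs' := hne s hs
      have hd : Complex.exp ((c₂:ℂ)*(s:ℂ)) - 1 ≠ 0 := sub_ne_zero.mpr hs'
      rw [hderiv (s:ℂ) hs']
      field_simp
      ring
    have := (hG.congr' (heq.mono fun s h => h.symm))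
    have hre := (Complex.continuous_re.tendsto _).comp this
    have h4 : ((c₂:ℂ)⁻¹).re = c₂⁻¹ := by
      rw [← Complex.ofReal_inv, Complex.ofReal_re]
    rw [← h4]
    exact hre
  -- 1/s² → ∞
  have hinv : Tendsto (fun s : ℝ => (s^2)⁻¹)
      (nhdsWithin 0 (Set.Ioi (0:ℝ))) atTop := by
    apply tendsto_inv_nhdsGT_zero.comp
    apply tendsto_nhdsWithin_of_tendsto_nhds_of_eventually_within
    · have : Continuous fun s : ℝ => s^2 := by fun_prop
      simpa using (this.tendsto 0).mono_left nhdsWithin_le_nhds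
    · filter_upwards [self_mem_nhdsWithin] with s hs
      exact pow_pos (show (0:ℝ) < s from hs) 2
  have main1 : Tendsto (fun s : ℝ => (-(deriv F (s : ℂ))).re)
      (nhdsWithin 0 (Set.Ioi (0:ℝ))) atTop := by
    have h := Tendsto.pos_mul_atTop (by positivity : (0:ℝ) < c₂⁻¹) hL hinv
    refine h.congr' ?_
    filter_upwards [self_mem_nhdsWithin] with s hs
    have hs0 : s ≠ 0 := ne_of_gt hs
    have : ((s:ℂ)^2 * (-(deriv F (s:ℂ)))).re = s^2 * (-(deriv F (s:ℂ))).re := by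
      have : ((s:ℂ))^2 = ((s^2 : ℝ) : ℂ) := by push_cast; ring
      rw [this, Complex.re_ofReal_mul]
    rw [this]
    field_simp
  refine ⟨main1, ?_⟩
  have := Real.tendsto_exp_atTop.comp main1
  refine this.congr (fun s => ?_)
  simp [Complex.norm_exp]
end

section
/- Let b be real and let H, K : ℂ → ℂ be differentiable at 0 with H(0) = −1/2 + i·b. Define ζ₁(s) = exp(−iπs/2)·H(s) + exp(−3iπs/2)·K(s) and ζ₂(s) = exp(−5iπs/2)·H(s) + exp(−3iπs/2)·K(s). Then ζ₁ and ζ₂ are differentiable at 0 and exp(−ζ₁′(0)) = −exp(2bπ) · exp(−ζ₂′(0)). In words: for eigenvalues λ_j = b + ij, j ∈ ℤ \ {0}, the ratio of the spectral determinants for the branch cut on the positive real axis (arguments in (0, 2π)) and for the branch cut on the negative real axis (arguments in (π, 3π)) equals −e^{2bπ}. -/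
open Complex Real

/-- For eigenvalues `λ_j = b + ij`, `j ∈ ℤ \ {0}`, the ratio of the spectral
determinants for the branch cut on the positive real axis (arguments in `(0, 2π)`,
zeta function `ζ₁`) and on the negative real axis (arguments in `(π, 3π)`, zeta
function `ζ₂`) equals `−e^{2bπ}`. Here `H` and `K` play the roles of the Hurwitz zeta
functions `s ↦ ζ_H(s, 1 − ib)` and `s ↦ ζ_H(s, 1 + ib)`, with
`ζ_H(0, 1 − ib) = −1/2 + ib`. -/
theorem vertical_line_determinant_ratio
    (b : ℝ) (H K : ℂ → ℂ)
    (hH : DifferentiableAt ℂ H 0) (hK : DifferentiableAt ℂ K 0)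
    (hH0 : H 0 = -(1 / 2) + Complex.I * b)
    (ζ₁ ζ₂ : ℂ → ℂ)
    (hζ₁ : ∀ s : ℂ, ζ₁ s = Complex.exp (-(Complex.I * Real.pi * s / 2)) * H s +
      Complex.exp (-(3 * Complex.I * Real.pi * s / 2)) * K s)
    (hζ₂ : ∀ s : ℂ, ζ₂ s = Complex.exp (-(5 * Complex.I * Real.pi * s / 2)) * H s +
      Complex.exp (-(3 * Complex.I * Real.pi * s / 2)) * K s) :
    DifferentiableAt ℂ ζ₁ 0 ∧ DifferentiableAt ℂ ζ₂ 0 ∧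
      Complex.exp (-(deriv ζ₁ 0)) =
        -Complex.exp (2 * b * Real.pi) * Complex.exp (-(deriv ζ₂ 0)) := by
  have e : ∀ c : ℂ, HasDerivAt (fun s : ℂ => Complex.exp (c * s)) c 0 := fun c => by
    simpa using ((hasDerivAt_id (0:ℂ)).const_mul c).cexp
  set c1 : ℂ := -(Complex.I * Real.pi / 2)
  set c3 : ℂ := -(3 * Complex.I * Real.pi / 2)
  set c5 : ℂ := -(5 * Complex.I * Real.pi / 2)
  have hz1 : ζ₁ = fun s => Complex.exp (c1 * s) * H s + Complex.exp (c3 * s) * K s := by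
    funext s; rw [hζ₁ s]; simp only [c1, c3]; ring_nf
  have hz2 : ζ₂ = fun s => Complex.exp (c5 * s) * H s + Complex.exp (c3 * s) * K s := by
    funext s; rw [hζ₂ s]; simp only [c5, c3]; ring_nf
  have d1 : HasDerivAt ζ₁ (c1 * H 0 + deriv H 0 + (c3 * K 0 + deriv K 0)) 0 := by
    rw [hz1]
    have := ((e c1).mul hH.hasDerivAt).add ((e c3).mul hK.hasDerivAt)
    exact this.congr_deriv (by simp)
  have d2 : HasDerivAt ζ₂ (c5 * H 0 + deriv H 0 + (c3 * K 0 + deriv K 0)) 0 := by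
    rw [hz2]
    have := ((e c5).mul hH.hasDerivAt).add ((e c3).mul hK.hasDerivAt)
    exact this.congr_deriv (by simp)
  refine ⟨d1.differentiableAt, d2.differentiableAt, ?_⟩
  rw [d1.deriv, d2.deriv]
  have key : -(c1 * H 0 + deriv H 0 + (c3 * K 0 + deriv K 0)) =
      (Real.pi * Complex.I + 2 * b * Real.pi) +
        -(c5 * H 0 + deriv H 0 + (c3 * K 0 + deriv K 0)) := by
    rw [hH0]; simp only [c1, c5]; ring_nf
    rw [Complex.I_sq]; ring
  rw [key, Complex.exp_add, Complex.exp_add, Complex.exp_pi_mul_I]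
  ring
end
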